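/- (Two classical players with the same action group.) In a canonical game of 2m rounds (m ≥ 1) on ℂ^n where both players' action group is exactly the group of n×n permutation matrices (the standard matrix representation of S_n), neither player has a strong winning strategy: for every sequence of permutation matrices A_1, …, A_m there exist permutation matrices B_1, …, B_m with B_m A_m ⋯ B_1 A_1 e_{q0} ≠ e_{qA}, and for every sequence of permutation matrices B_1, …, B_m there exist permutation matrices A_1, …, A_m with B_m A_m ⋯ B_1 A_1 e_{q0} ≠ e_{qB}. -/

import Mathlib

/-- The product of the moves in a canonical `2m`-round game, namely
`B_m * A_m * ⋯ * B_1 * A_1`, where player 1 plays `A_1, …, A_m` at odd rounds and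
player 2 plays `B_1, …, B_m` at even rounds. -/
noncomputable def canonicalProd {n m : ℕ} (As Bs : Fin m → Matrix (Fin n) (Fin n) ℂ) :
    Matrix (Fin n) (Fin n) ℂ :=
  ((List.ofFn fun i => Bs i * As i).reverse).prod

/-- The product of the moves in a noncanonical `2m+1`-round game, namely
`A_{m+1} * B_m * A_m * ⋯ * B_1 * A_1`, where player 1 makes the first and the
last move. -/
noncomputable def noncanonicalProd {n m : ℕ} (As : Fin (m + 1) → Matrix (Fin n) (Fin n) ℂ)
    (Bs : Fin m → Matrix (Fin n) (Fin n) ℂ) : Matrix (Fin n) (Fin n) ℂ :=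
  As (Fin.last m) * ((List.ofFn fun i : Fin m => Bs i * As i.castSucc).reverse).prod

/-- The underlying matrix of an element of a subgroup of the unitary group. -/
noncomputable def toMat {n : ℕ} {G : Subgroup (Matrix.unitaryGroup (Fin n) ℂ)} (x : G) :
    Matrix (Fin n) (Fin n) ℂ :=
  ((x : Matrix.unitaryGroup (Fin n) ℂ) : Matrix (Fin n) (Fin n) ℂ)

/-- `G` contains (the standard matrix representation of) the symmetric group `S_n`:
every `n × n` permutation matrix belongs to `G`. -/
def containsSn {n : ℕ} (G : Subgroup (Matrix.unitaryGroup (Fin n) ℂ)) : Prop :=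
  ∀ σ : Equiv.Perm (Fin n), ∃ P ∈ G,
    ((P : Matrix.unitaryGroup (Fin n) ℂ) : Matrix (Fin n) (Fin n) ℂ) = σ.permMatrix ℂ

lemma permMatrix_mul {n : ℕ} (σ τ : Equiv.Perm (Fin n)) :
    ((σ * τ).permMatrix ℂ) = τ.permMatrix ℂ * σ.permMatrix ℂ := by
  unfold Equiv.Perm.permMatrix
  rw [← PEquiv.toMatrix_trans, ← Equiv.toPEquiv_trans]
  rfl

lemma permMatrix_mulVec_single {n : ℕ} (σ : Equiv.Perm (Fin n)) (q : Fin n) :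
    (σ.permMatrix ℂ).mulVec (Pi.single q 1) = Pi.single (σ⁻¹ q) 1 := by
  ext i
  simp [Matrix.mulVec, dotProduct, Pi.single_apply, PEquiv.toMatrix_apply,
    Equiv.toPEquiv_apply, Equiv.eq_symm_apply, eq_comm, Equiv.Perm.inv_def]

lemma canonicalProd_perm {n m : ℕ} (As Bs : Fin m → Equiv.Perm (Fin n)) :
    canonicalProd (fun i => (As i).permMatrix ℂ) (fun i => (Bs i).permMatrix ℂ)
      = ((List.ofFn fun i => As i * Bs i).prod).permMatrix ℂ := by
  unfold canonicalProd
  induction m with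
  | zero =>
    ext i j
    simp [PEquiv.toMatrix_apply, Equiv.toPEquiv_apply, Matrix.one_apply, eq_comm]
  | succ k ih =>
    rw [List.ofFn_succ, List.ofFn_succ, List.reverse_cons, List.prod_append, List.prod_cons,
      List.prod_cons, List.prod_nil, mul_one, permMatrix_mul, permMatrix_mul,
      ih (fun i => As i.succ) (fun i => Bs i.succ)]

lemma exists_avoid {n : ℕ} (hn : 2 ≤ n) (x t : Fin n) :
    ∃ c : Equiv.Perm (Fin n), c x ≠ t := by
  by_cases hx : x = t
  · subst hx
    obtain ⟨y, hy⟩ : ∃ y : Fin n, y ≠ x :=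
      ⟨if h0 : x = ⟨0, by omega⟩ then ⟨1, by omega⟩ else ⟨0, by omega⟩, by
        split <;> simp_all [Fin.ext_iff] <;> omega⟩
    exact ⟨Equiv.swap x y, by simpa [Equiv.swap_apply_left] using hy⟩
  · exact ⟨1, by simpa⟩

lemma single_ne {n : ℕ} {a b : Fin n} (h : a ≠ b) :
    (Pi.single a 1 : Fin n → ℂ) ≠ Pi.single b 1 := by
  intro he
  have := congrFun he b
  rw [Pi.single_eq_of_ne (Ne.symm h), Pi.single_eq_same] at this
  exact zero_ne_one this

lemma prod_head {n k : ℕ} (c : Equiv.Perm (Fin n)) (f : Fin (k + 1) → Equiv.Perm (Fin n))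
    (h0 : f 0 = c) (hs : ∀ j : Fin k, f j.succ = 1) :
    (List.ofFn f).prod = c := by
  rw [List.ofFn_succ, List.prod_cons, h0]
  rw [List.prod_eq_one, mul_one]
  intro x hx
  rw [List.mem_ofFn] at hx
  obtain ⟨j, rfl⟩ := hx
  exact hs j

/-- Two classical players with the same action group: in a canonical game of `2m`
rounds where both players' moves are exactly the `n × n` permutation matrices,
neither player has a strong winning strategy. -/
theorem canonical_classical_players_no_sws
    (n m : ℕ) (hn : 2 ≤ n) (hm : 1 ≤ m)
    (q0 qA qB : Fin n) (hq : qA ≠ qB) :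
    (∀ As : Fin m → Equiv.Perm (Fin n), ∃ Bs : Fin m → Equiv.Perm (Fin n),
      (canonicalProd (fun i => (As i).permMatrix ℂ) (fun i => (Bs i).permMatrix ℂ)).mulVec
        (Pi.single q0 1) ≠ Pi.single qA 1) ∧
    (∀ Bs : Fin m → Equiv.Perm (Fin n), ∃ As : Fin m → Equiv.Perm (Fin n),
      (canonicalProd (fun i => (As i).permMatrix ℂ) (fun i => (Bs i).permMatrix ℂ)).mulVec
        (Pi.single q0 1) ≠ Pi.single qB 1) := by
  obtain ⟨k, rfl⟩ : ∃ k, m = k + 1 := ⟨m - 1, by omega⟩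
  constructor
  · intro As
    obtain ⟨c, hc⟩ := exists_avoid hn qA q0
    refine ⟨Fin.cases ((As 0)⁻¹ * c) (fun i => (As i.succ)⁻¹), ?_⟩
    rw [canonicalProd_perm,
      prod_head c _ (by simp [mul_assoc]) (fun j => by simp),
      permMatrix_mulVec_single]
    exact single_ne fun h => hc (by rw [← h, ← Equiv.Perm.mul_apply, mul_inv_cancel, Equiv.Perm.one_apply])
  · intro Bs
    obtain ⟨c, hc⟩ := exists_avoid hn qB q0
    refine ⟨Fin.cases (c * (Bs 0)⁻¹) (fun i => (Bs i.succ)⁻¹), ?_⟩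
    rw [canonicalProd_perm,
      prod_head c _ (by simp [mul_assoc]) (fun j => by simp),
      permMatrix_mulVec_single]
    exact single_ne fun h => hc (by rw [← h, ← Equiv.Perm.mul_apply, mul_inv_cancel, Equiv.Perm.one_apply])
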